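/- A graph M has a nowhere-zero k-flow (k ≥ 3) if and only if there is an orientation D of M such that the function w(v) = (k/(k−2))·(2·d⁺_D(v) − d(v)) is a balanced valuation of M, i.e., for every vertex subset X, |∑_{v∈X} w(v)| ≤ |∂(X)|, where ∂(X) is the set of edges with exactly one end in X. -/

import Mathlib

variable {V : Type*} [Fintype V] [DecidableEq V]

/-- The edge cut `∂(X)`: the set of edges of `G` with exactly one end in `X`. -/
noncomputable def SimpleGraph.cutCard (G : SimpleGraph V) (X : Finset V) : ℕ :=
  {e ∈ G.edgeSet | ∃ x y : V, e = s(x, y) ∧ x ∈ X ∧ y ∉ X}.ncard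

/-- A balanced valuation of `G`: a real vertex-function `w` with
`|∑_{v ∈ X} w(v)| ≤ |∂(X)|` for every vertex subset `X`. -/
noncomputable def SimpleGraph.IsBalancedValuation (G : SimpleGraph V) (w : V → ℝ) : Prop :=
  ∀ X : Finset V, |∑ v ∈ X, w v| ≤ (G.cutCard X : ℝ)

/-- A nowhere-zero `k`-flow in the signed model: a skew-symmetric integer function on
ordered pairs (sign = orientation, absolute value = flow value in `{1, …, k−1}`),
supported on edges and conserved at every vertex. -/
def SimpleGraph.IsNZFlow (G : SimpleGraph V) (k : ℕ) (f : V → V → ℤ) : Prop :=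
  (∀ v w, f v w = - f w v) ∧ (∀ v w, ¬ G.Adj v w → f v w = 0) ∧
  (∀ v, ∑ w, f v w = 0) ∧ ∀ v w, G.Adj v w → 1 ≤ |f v w| ∧ |f v w| ≤ (k : ℤ) - 1

/-- An orientation of `G`: a direction for each edge. -/
def SimpleGraph.IsOrientation (G : SimpleGraph V) (D : V → V → Prop) : Prop :=
  (∀ v w, D v w → G.Adj v w) ∧ ∀ v w, G.Adj v w → (D v w ↔ ¬ D w v)

/-- The outdegree `d⁺_D(v)` of `v` under the orientation `D`. -/
noncomputable def outDeg (D : V → V → Prop) (v : V) : ℕ := {w | D v w}.ncard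

/- STATEMENT 1 (Jaeger): a graph `M` has a nowhere-zero `k`-flow (`k ≥ 3`) iff there is
an orientation `D` of `M` such that `v ↦ (k/(k−2))·(2·d⁺_D(v) − d(v))` is a balanced
valuation of `M`. -/
set_option linter.unusedSectionVars false
section Aux
attribute [local instance] Classical.propDecidable
open Finset

noncomputable def ind (P : Prop) : ℤ := if P then 1 else 0

lemma ind_nonneg (P : Prop) : 0 ≤ ind P := by unfold ind; split <;> norm_num
lemma ind_true {P : Prop} (h : P) : ind P = 1 := if_pos h
lemma ind_false {P : Prop} (h : ¬P) : ind P = 0 := if_neg h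

noncomputable def arcCount (D : V → V → Prop) (X Y : Finset V) : ℤ :=
  ∑ v ∈ X, ∑ w ∈ Y, ind (D v w)

lemma arcCount_nonneg (D : V → V → Prop) (X Y : Finset V) : 0 ≤ arcCount D X Y :=
  Finset.sum_nonneg fun _ _ => Finset.sum_nonneg fun _ _ => ind_nonneg _

variable {M : SimpleGraph V} {D : V → V → Prop}

lemma ori_not_both (h : M.IsOrientation D) {v w : V} (hd : D v w) : ¬ D w v :=
  (h.2 v w (h.1 v w hd)).mp hd

lemma ori_ind (h : M.IsOrientation D) (v w : V) :
    ind (D v w) + ind (D w v) = ind (M.Adj v w) := by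
  by_cases ha : M.Adj v w
  · by_cases hd : D v w
    · rw [ind_true hd, ind_true ha, ind_false (ori_not_both h hd)]; ring
    · have hwv : D w v := by
        have := h.2 v w ha; tauto
      rw [ind_false hd, ind_true hwv, ind_true ha]; ring
  · rw [ind_false (fun hd => ha (h.1 v w hd)), ind_false (fun hd => ha ((h.1 w v hd).symm)),
      ind_false ha]; ring

lemma outDeg_eq (D : V → V → Prop) (v : V) : (outDeg D v : ℤ) = ∑ w, ind (D v w) := by
  unfold outDeg
  rw [Set.ncard_eq_toFinset_card']
  simp only [Set.toFinset_setOf, ind, Finset.sum_boole]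

lemma degree_eq [DecidableRel M.Adj] (v : V) : (M.degree v : ℤ) = ∑ w, ind (M.Adj v w) := by
  rw [SimpleGraph.degree, SimpleGraph.neighborFinset_eq_filter, Finset.card_filter]
  push_cast
  simp only [ind]
  exact Finset.sum_congr rfl fun w _ => by split_ifs <;> simp_all

lemma sum_outdeg [DecidableRel M.Adj] (h : M.IsOrientation D) (X : Finset V) :
    ∑ v ∈ X, (2 * (outDeg D v : ℤ) - (M.degree v : ℤ)) =
      arcCount D X Xᶜ - arcCount D Xᶜ X := by
  have key : ∀ v ∈ X, 2 * (outDeg D v : ℤ) - (M.degree v : ℤ)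
      = ∑ w, (2 * ind (D v w) - ind (M.Adj v w)) := by
    intro v _
    rw [outDeg_eq, degree_eq, Finset.sum_sub_distrib, Finset.mul_sum]
  rw [Finset.sum_congr rfl key]
  have split : ∀ v ∈ X, ∑ w, (2 * ind (D v w) - ind (M.Adj v w))
      = (∑ w ∈ X, (2 * ind (D v w) - ind (M.Adj v w)))
        + ∑ w ∈ Xᶜ, (2 * ind (D v w) - ind (M.Adj v w)) := by
    intro v _
    rw [Finset.sum_add_sum_compl]
  rw [Finset.sum_congr rfl split, Finset.sum_add_distrib]
  have claim1 : ∑ v ∈ X, ∑ w ∈ X, (2 * ind (D v w) - ind (M.Adj v w)) = 0 := by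
    have hc : ∑ v ∈ X, ∑ w ∈ X, ind (D v w) = ∑ v ∈ X, ∑ w ∈ X, ind (D w v) :=
      Finset.sum_comm
    have : ∀ v ∈ X, ∀ w ∈ X, 2 * ind (D v w) - ind (M.Adj v w)
        = ind (D v w) - ind (D w v) := by
      intro v _ w _
      rw [← ori_ind h v w]; ring
    calc ∑ v ∈ X, ∑ w ∈ X, (2 * ind (D v w) - ind (M.Adj v w))
        = ∑ v ∈ X, ∑ w ∈ X, (ind (D v w) - ind (D w v)) := by
          refine Finset.sum_congr rfl fun v hv => Finset.sum_congr rfl fun w hw => this v hv w hw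
      _ = (∑ v ∈ X, ∑ w ∈ X, ind (D v w)) - ∑ v ∈ X, ∑ w ∈ X, ind (D w v) := by
          rw [← Finset.sum_sub_distrib]
          exact Finset.sum_congr rfl fun v _ => Finset.sum_sub_distrib _ _
      _ = 0 := by rw [hc]; ring
  have claim2 : ∑ v ∈ X, ∑ w ∈ Xᶜ, (2 * ind (D v w) - ind (M.Adj v w))
      = arcCount D X Xᶜ - arcCount D Xᶜ X := by
    have hc : ∑ v ∈ X, ∑ w ∈ Xᶜ, ind (D w v) = arcCount D Xᶜ X := by
      unfold arcCount; exact Finset.sum_comm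
    calc ∑ v ∈ X, ∑ w ∈ Xᶜ, (2 * ind (D v w) - ind (M.Adj v w))
        = ∑ v ∈ X, ∑ w ∈ Xᶜ, (ind (D v w) - ind (D w v)) := by
          refine Finset.sum_congr rfl fun v hv => Finset.sum_congr rfl fun w hw => ?_
          rw [← ori_ind h v w]; ring
      _ = (∑ v ∈ X, ∑ w ∈ Xᶜ, ind (D v w)) - ∑ v ∈ X, ∑ w ∈ Xᶜ, ind (D w v) := by
          rw [← Finset.sum_sub_distrib]
          exact Finset.sum_congr rfl fun v _ => Finset.sum_sub_distrib _ _
      _ = arcCount D X Xᶜ - arcCount D Xᶜ X := by rw [hc]; rfl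
  rw [claim1, claim2]; ring

lemma cutCard_eq (X : Finset V) :
    (M.cutCard X : ℤ) = ∑ v ∈ X, ∑ w ∈ Xᶜ, ind (M.Adj v w) := by
  classical
  set E := (X ×ˢ Xᶜ).filter (fun p : V × V => M.Adj p.1 p.2) with hE
  have hset : {e ∈ M.edgeSet | ∃ x y : V, e = s(x, y) ∧ x ∈ X ∧ y ∉ X}
      = ↑(E.image fun p : V × V => s(p.1, p.2)) := by
    ext e
    simp only [Set.mem_setOf_eq, Finset.coe_image, Set.mem_image, Finset.mem_coe, hE,
      Finset.mem_filter, Finset.mem_product, Finset.mem_compl]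
    constructor
    · rintro ⟨he, x, y, rfl, hx, hy⟩
      exact ⟨(x, y), ⟨⟨hx, hy⟩, he⟩, rfl⟩
    · rintro ⟨⟨x, y⟩, ⟨⟨hx, hy⟩, ha⟩, rfl⟩
      exact ⟨ha, x, y, rfl, hx, hy⟩
  have hinj : Set.InjOn (fun p : V × V => s(p.1, p.2)) ↑E := by
    rintro ⟨x, y⟩ hp ⟨z, w⟩ hq hpq
    simp only [hE, Finset.coe_filter, Finset.mem_coe, Finset.mem_product,
      Finset.mem_compl, Set.mem_setOf_eq] at hp hq
    simp only [Sym2.eq, Sym2.rel_iff', Prod.mk.injEq, Prod.swap_prod_mk] at hpq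
    rcases hpq with ⟨rfl, rfl⟩ | ⟨rfl, rfl⟩
    · rfl
    · exact absurd hp.1.1 hq.1.2
  have hcard : M.cutCard X = E.card := by
    rw [SimpleGraph.cutCard, hset, Set.ncard_coe_finset, Finset.card_image_of_injOn hinj]
  rw [hcard, Finset.card_filter]
  push_cast
  rw [Finset.sum_product]
  refine Finset.sum_congr rfl fun v _ => Finset.sum_congr rfl fun w _ => ?_
  by_cases hvw : M.Adj v w <;> simp [ind, hvw]

lemma cutCard_eq' (h : M.IsOrientation D) (X : Finset V) :
    (M.cutCard X : ℤ) = arcCount D X Xᶜ + arcCount D Xᶜ X := by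
  rw [cutCard_eq]
  have hc : ∑ v ∈ X, ∑ w ∈ Xᶜ, ind (D w v) = arcCount D Xᶜ X := by
    unfold arcCount; exact Finset.sum_comm
  calc ∑ v ∈ X, ∑ w ∈ Xᶜ, ind (M.Adj v w)
      = ∑ v ∈ X, ∑ w ∈ Xᶜ, (ind (D v w) + ind (D w v)) := by
        refine Finset.sum_congr rfl fun v _ => Finset.sum_congr rfl fun w _ => ?_
        rw [ori_ind h]
    _ = (∑ v ∈ X, ∑ w ∈ Xᶜ, ind (D v w)) + ∑ v ∈ X, ∑ w ∈ Xᶜ, ind (D w v) := by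
        rw [← Finset.sum_add_distrib]
        exact Finset.sum_congr rfl fun v _ => Finset.sum_add_distrib
    _ = arcCount D X Xᶜ + arcCount D Xᶜ X := by rw [hc]; rfl

/-! ### Preflow machinery (Hoffman-style circulation existence) -/

def IsPreFlow (M : SimpleGraph V) (D : V → V → Prop) (k : ℕ) (g : V → V → ℤ) : Prop :=
  (∀ v w, g v w = - g w v) ∧ (∀ v w, ¬ M.Adj v w → g v w = 0) ∧
  (∀ v w, D v w → 1 ≤ g v w ∧ g v w ≤ (k : ℤ) - 1)

noncomputable def excess (g : V → V → ℤ) (v : V) : ℤ := ∑ w, g v w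

noncomputable def Phi (g : V → V → ℤ) : ℕ := ∑ v, (excess g v).natAbs

noncomputable def push (g : V → V → ℤ) (a b : V) : V → V → ℤ :=
  fun x y => g x y + (if x = a ∧ y = b then 1 else 0) - (if x = b ∧ y = a then 1 else 0)

def Resid (k : ℕ) (D : V → V → Prop) (g : V → V → ℤ) (a b : V) : Prop :=
  (D a b ∧ g a b < (k : ℤ) - 1) ∨ (D b a ∧ 1 < g b a)

inductive PathN (r : V → V → Prop) : ℕ → V → V → Prop
  | refl (a : V) : PathN r 0 a a
  | head {a b c : V} {n : ℕ} : r a b → PathN r n b c → PathN r (n + 1) a c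

lemma pathN_tail {r : V → V → Prop} :
    ∀ {n a b}, PathN r n a b → ∀ {c}, r b c → PathN r (n + 1) a c := by
  intro n a b hp
  induction hp with
  | refl a => exact fun hc => PathN.head hc (PathN.refl _)
  | head hab _ ih => exact fun hc => PathN.head hab (ih hc)

lemma pathN_of_rtg {r : V → V → Prop} {a b : V} (h : Relation.ReflTransGen r a b) :
    ∃ n, PathN r n a b := by
  induction h with
  | refl => exact ⟨0, PathN.refl a⟩
  | tail _ hbc ih => obtain ⟨n, hn⟩ := ih; exact ⟨n + 1, pathN_tail hn hbc⟩

lemma pathN_split {r r' : V → V → Prop} {a : V}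
    (hrr : ∀ x y, x ≠ a → y ≠ a → r x y → r' x y) :
    ∀ {n b u}, PathN r n b u → b ≠ a → u ≠ a →
      PathN r' n b u ∨ ∃ m, m < n ∧ PathN r m a u := by
  intro n b u hp
  induction hp with
  | refl c => exact fun _ _ => Or.inl (PathN.refl c)
  | @head x y c n hxy hyc ih =>
    intro hx hc
    by_cases hy : y = a
    · exact Or.inr ⟨n, Nat.lt_succ_self n, hy ▸ hyc⟩
    · rcases ih hy hc with h' | ⟨m, hm, pm⟩
      · exact Or.inl (PathN.head (hrr x y hx hy hxy) h')
      · exact Or.inr ⟨m, hm.trans (Nat.lt_succ_self n), pm⟩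

variable {k : ℕ}

lemma sum_excess_zero {g : V → V → ℤ} (hs : ∀ v w, g v w = - g w v) :
    ∑ v, excess g v = 0 := by
  have h1 : ∑ v, ∑ w, g v w = ∑ v, ∑ w, g w v := Finset.sum_comm
  have h2 : ∑ v, ∑ w, g w v = - ∑ v, ∑ w, g v w := by
    rw [← Finset.sum_neg_distrib]
    refine Finset.sum_congr rfl fun v _ => ?_
    rw [← Finset.sum_neg_distrib]
    exact Finset.sum_congr rfl fun w _ => by rw [hs w v]
  unfold excess
  omega

lemma rel_adj (h : M.IsOrientation D) {g : V → V → ℤ} {a b : V}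
    (hr : Resid k D g a b) : M.Adj a b := by
  rcases hr with ⟨hd, _⟩ | ⟨hd, _⟩
  · exact h.1 a b hd
  · exact (h.1 b a hd).symm

lemma push_eq_of_ne {g : V → V → ℤ} {a b x y : V}
    (h1 : ¬(x = a ∧ y = b)) (h2 : ¬(x = b ∧ y = a)) : push g a b x y = g x y := by
  simp [push, h1, h2]

lemma push_skew {g : V → V → ℤ} (hs : ∀ v w, g v w = - g w v) (a b : V) :
    ∀ x y, push g a b x y = - push g a b y x := by
  intro x y
  have e1 : (y = a ∧ x = b) ↔ (x = b ∧ y = a) := and_comm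
  have e2 : (y = b ∧ x = a) ↔ (x = a ∧ y = b) := and_comm
  simp only [push, hs x y, e1, e2]
  ring

lemma excess_push (g : V → V → ℤ) {a b : V} (hab : a ≠ b) (v : V) :
    excess (push g a b) v
      = excess g v + (if v = a then 1 else 0) - (if v = b then 1 else 0) := by
  unfold excess push
  rw [Finset.sum_sub_distrib, Finset.sum_add_distrib]
  congr 1
  · congr 1
    by_cases hv : v = a
    · simp [hv]
    · simp [hv]
  · by_cases hv : v = b
    · simp [hv]
    · simp [hv]

lemma preflow_push (h : M.IsOrientation D) {g : V → V → ℤ}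
    (hg : IsPreFlow M D k g) {a b : V} (hr : Resid k D g a b) :
    IsPreFlow M D k (push g a b) := by
  obtain ⟨hs, hsup, hbd⟩ := hg
  have hab : a ≠ b := (rel_adj h hr).ne
  refine ⟨push_skew hs a b, ?_, ?_⟩
  · intro v w hvw
    rw [push_eq_of_ne, hsup v w hvw]
    · rintro ⟨rfl, rfl⟩; exact hvw (rel_adj h hr)
    · rintro ⟨rfl, rfl⟩; exact hvw (rel_adj h hr).symm
  · intro v w hd
    by_cases h1 : v = a ∧ w = b
    · obtain ⟨rfl, rfl⟩ := h1
      have hval : push g v w v w = g v w + 1 := by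
        simp [push, hab, hab.symm]
      rcases hr with ⟨hd', hlt⟩ | ⟨hd', _⟩
      · have := hbd v w hd'
        rw [hval]; omega
      · exact absurd hd (ori_not_both h hd')
    · by_cases h2 : v = b ∧ w = a
      · obtain ⟨rfl, rfl⟩ := h2
        have hval : push g w v v w = g v w - 1 := by
          simp [push, hab, hab.symm]
        rcases hr with ⟨hd', _⟩ | ⟨hd', hgt⟩
        · exact absurd hd (ori_not_both h hd')
        · have := hbd v w hd'
          rw [hval]; omega
      · rw [push_eq_of_ne h1 h2]
        exact hbd v w hd

lemma rel_push_sub {g : V → V → ℤ} {a b : V} :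
    ∀ x y, x ≠ a → y ≠ a → Resid k D g x y → Resid k D (push g a b) x y := by
  intro x y hx hy hr
  have e1 : push g a b x y = g x y := by
    apply push_eq_of_ne
    · rintro ⟨rfl, -⟩; exact hx rfl
    · rintro ⟨-, rfl⟩; exact hy rfl
  have e2 : push g a b y x = g y x := by
    apply push_eq_of_ne
    · rintro ⟨rfl, -⟩; exact hy rfl
    · rintro ⟨-, rfl⟩; exact hx rfl
  unfold Resid at *
  rw [e1, e2]
  exact hr

lemma phi_split {a b : V} (hab : a ≠ b) (g : V → V → ℤ) :
    Phi g = (excess g a).natAbs + (excess g b).natAbs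
      + ∑ v ∈ (Finset.univ.erase a).erase b, (excess g v).natAbs := by
  unfold Phi
  rw [← Finset.add_sum_erase _ _ (Finset.mem_univ a),
    ← Finset.add_sum_erase _ _ (Finset.mem_erase.mpr ⟨hab.symm, Finset.mem_univ b⟩)]
  ring

lemma excess_push_eq (g : V → V → ℤ) {a b : V} (hab : a ≠ b) :
    excess (push g a b) a = excess g a + 1 ∧ excess (push g a b) b = excess g b - 1 ∧
      ∀ v, v ≠ a → v ≠ b → excess (push g a b) v = excess g v := by
  refine ⟨?_, ?_, fun v hva hvb => ?_⟩
  · rw [excess_push g hab]; simp [hab, hab.symm]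
  · rw [excess_push g hab]; simp [hab, hab.symm]
  · rw [excess_push g hab]; simp [hva, hvb]

lemma descent (h : M.IsOrientation D) :
    ∀ n : ℕ, ∀ g : V → V → ℤ, IsPreFlow M D k g → ∀ a u : V,
      excess g a < 0 → 0 < excess g u → PathN (Resid k D g) n a u →
      ∃ g', IsPreFlow M D k g' ∧ Phi g' < Phi g := by
  intro n
  induction n using Nat.strong_induction_on with
  | _ n ih =>
    intro g hg a u ha hu hp
    cases hp with
    | refl => omega
    | @head a b u m hr p =>
      have hadj := rel_adj h hr
      have hne : a ≠ b := hadj.ne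
      have hg1 : IsPreFlow M D k (push g a b) := preflow_push h hg hr
      obtain ⟨e_a, e_b, e_other⟩ := excess_push_eq g hne
      have heq : ∑ x ∈ (Finset.univ.erase a).erase b, (excess (push g a b) x).natAbs
          = ∑ x ∈ (Finset.univ.erase a).erase b, (excess g x).natAbs := by
        refine Finset.sum_congr rfl fun x hx => ?_
        rw [e_other x (Finset.ne_of_mem_erase (Finset.mem_of_mem_erase hx))
          (Finset.ne_of_mem_erase hx)]
      by_cases hb : 0 < excess g b
      · refine ⟨push g a b, hg1, ?_⟩
        rw [phi_split hne (push g a b), phi_split hne g, e_a, e_b, heq]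
        omega
      · push_neg at hb
        have hub : u ≠ b := fun h' => by rw [h'] at hu; omega
        have hua : u ≠ a := fun h' => by rw [h'] at hu; omega
        have hphi : Phi (push g a b) = Phi g := by
          rw [phi_split hne (push g a b), phi_split hne g, e_a, e_b, heq]
          omega
        have hb1 : excess (push g a b) b < 0 := by rw [e_b]; omega
        have hu1 : 0 < excess (push g a b) u := by rw [e_other u hua hub]; exact hu
        rcases pathN_split (fun x y hx hy => rel_push_sub x y hx hy) p hne.symm hua with
          hp' | ⟨m', hm', pm⟩
        · obtain ⟨g', hg', hlt⟩ := ih m (Nat.lt_succ_self m) (push g a b) hg1 b u hb1 hu1 hp'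
          exact ⟨g', hg', by omega⟩
        · exact ih m' (hm'.trans (Nat.lt_succ_self m)) g hg a u ha hu pm

lemma sum_sum_skew {g : V → V → ℤ} (hs : ∀ v w, g v w = - g w v) (s : Finset V) :
    ∑ a ∈ s, ∑ b ∈ s, g a b = 0 := by
  have h1 : ∑ a ∈ s, ∑ b ∈ s, g a b = ∑ a ∈ s, ∑ b ∈ s, g b a := Finset.sum_comm
  have h2 : ∑ a ∈ s, ∑ b ∈ s, g b a = - ∑ a ∈ s, ∑ b ∈ s, g a b := by
    rw [← Finset.sum_neg_distrib]
    refine Finset.sum_congr rfl fun a _ => ?_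
    rw [← Finset.sum_neg_distrib]
    exact Finset.sum_congr rfl fun b _ => by rw [hs b a]
  omega

lemma hoffman (h : M.IsOrientation D) (hk : 3 ≤ k)
    (hcut : ∀ X : Finset V, arcCount D X Xᶜ ≤ ((k : ℤ) - 1) * arcCount D Xᶜ X) :
    ∃ g, IsPreFlow M D k g ∧ ∀ v, excess g v = 0 := by
  have hbase : ∃ g, IsPreFlow M D k g := by
    refine ⟨fun v w => if D v w then 1 else if D w v then -1 else 0, ?_, ?_, ?_⟩
    · intro v w
      by_cases h1 : D v w
      · have h2 : ¬ D w v := ori_not_both h h1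
        simp [h1, h2]
      · by_cases h2 : D w v <;> simp [h1, h2]
    · intro v w hvw
      have h1 : ¬ D v w := fun hd => hvw (h.1 v w hd)
      have h2 : ¬ D w v := fun hd => hvw ((h.1 w v hd).symm)
      simp [h1, h2]
    · intro v w hd
      simp only [hd, if_true]
      constructor
      · exact le_refl 1
      · have : (3 : ℤ) ≤ (k : ℤ) := by exact_mod_cast hk
        omega
  obtain ⟨g0, hg0⟩ := hbase
  obtain ⟨g, hg, hgmin⟩ : ∃ g, IsPreFlow M D k g ∧
      ∀ g', IsPreFlow M D k g' → Phi g ≤ Phi g' := by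
    have hne : {n : ℕ | ∃ g, IsPreFlow M D k g ∧ Phi g = n}.Nonempty := ⟨Phi g0, g0, hg0, rfl⟩
    obtain ⟨g, hg, hg'⟩ := Nat.sInf_mem hne
    exact ⟨g, hg, fun g' hgp => hg' ▸ Nat.sInf_le ⟨g', hgp, rfl⟩⟩
  refine ⟨g, hg, ?_⟩
  by_contra hnz
  push_neg at hnz
  obtain ⟨v0, hv0⟩ := hnz
  have hsum : ∑ x, excess g x = 0 := sum_excess_zero hg.1
  have hneg : ∃ x, excess g x < 0 := by
    by_contra hcon
    push_neg at hcon
    exact hv0 ((Finset.sum_eq_zero_iff_of_nonneg fun x _ => hcon x).mp hsum v0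
      (Finset.mem_univ v0))
  obtain ⟨v, hv⟩ := hneg
  set Sf : Finset V := Finset.univ.filter (Relation.ReflTransGen (Resid k D g) v) with hSf
  have hvS : v ∈ Sf := Finset.mem_filter.mpr ⟨Finset.mem_univ v, Relation.ReflTransGen.refl⟩
  have hbdry : ∀ a ∈ Sf, ∀ b ∈ Sfᶜ,
      g a b = ((k : ℤ) - 1) * ind (D a b) - ind (D b a) := by
    intro a ha b hb
    have hnr : ¬ Resid k D g a b := fun hr => (Finset.mem_compl.mp hb)
      (Finset.mem_filter.mpr ⟨Finset.mem_univ b, ((Finset.mem_filter.mp ha).2).tail hr⟩)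
    by_cases hd1 : D a b
    · rw [ind_true hd1, ind_false (ori_not_both h hd1)]
      have hbd := hg.2.2 a b hd1
      have hlt : ¬ (g a b < (k : ℤ) - 1) := fun hlt => hnr (Or.inl ⟨hd1, hlt⟩)
      have : g a b = (k : ℤ) - 1 := by omega
      rw [this]; ring
    · by_cases hd2 : D b a
      · rw [ind_false hd1, ind_true hd2]
        have hbd := hg.2.2 b a hd2
        have hgt : ¬ (1 < g b a) := fun h' => hnr (Or.inr ⟨hd2, h'⟩)
        have hskew := hg.1 a b
        have : g b a = 1 := by omega
        rw [hskew, this]; ring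
      · have hna : ¬ M.Adj a b := by
          intro hadj
          have := h.2 a b hadj
          tauto
        rw [ind_false hd1, ind_false hd2, hg.2.1 a b hna]; ring
  have hsumS : ∑ a ∈ Sf, excess g a
      = ((k : ℤ) - 1) * arcCount D Sf Sfᶜ - arcCount D Sfᶜ Sf := by
    have hzero : ∑ x ∈ Sf, ∑ b ∈ Sf, g x b = 0 := sum_sum_skew hg.1 Sf
    have hsplit : ∑ a ∈ Sf, excess g a = ∑ a ∈ Sf, ∑ b ∈ Sfᶜ, g a b := by
      have hh : ∀ a ∈ Sf, excess g a = ∑ b ∈ Sf, g a b + ∑ b ∈ Sfᶜ, g a b := fun a _ => by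
        rw [excess, Finset.sum_add_sum_compl]
      rw [Finset.sum_congr rfl hh, Finset.sum_add_distrib, hzero, zero_add]
    rw [hsplit]
    have hpt : ∀ a ∈ Sf, ∑ b ∈ Sfᶜ, g a b
        = ∑ b ∈ Sfᶜ, (((k : ℤ) - 1) * ind (D a b) - ind (D b a)) := fun a ha =>
      Finset.sum_congr rfl fun b hb => hbdry a ha b hb
    rw [Finset.sum_congr rfl hpt]
    have hc : ∑ a ∈ Sf, ∑ b ∈ Sfᶜ, ind (D b a) = arcCount D Sfᶜ Sf := by
      unfold arcCount; exact Finset.sum_comm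
    calc ∑ a ∈ Sf, ∑ b ∈ Sfᶜ, (((k : ℤ) - 1) * ind (D a b) - ind (D b a))
        = (∑ a ∈ Sf, ∑ b ∈ Sfᶜ, ((k : ℤ) - 1) * ind (D a b))
            - ∑ a ∈ Sf, ∑ b ∈ Sfᶜ, ind (D b a) := by
          rw [← Finset.sum_sub_distrib]
          exact Finset.sum_congr rfl fun a _ => Finset.sum_sub_distrib _ _
      _ = ((k : ℤ) - 1) * arcCount D Sf Sfᶜ - arcCount D Sfᶜ Sf := by
          rw [hc]
          congr 1
          rw [arcCount, Finset.mul_sum]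
          exact Finset.sum_congr rfl fun a _ => (Finset.mul_sum _ _ _).symm
  have hge : 0 ≤ ∑ a ∈ Sf, excess g a := by
    have h1 := hcut Sfᶜ
    rw [compl_compl] at h1
    rw [hsumS]; linarith
  have hpos : ∃ u ∈ Sf, 0 < excess g u := by
    by_contra hcon
    push_neg at hcon
    have h1 : ∑ a ∈ Sf.erase v, excess g a ≤ 0 :=
      Finset.sum_nonpos fun a ha => hcon a (Finset.mem_of_mem_erase ha)
    have h2 : ∑ a ∈ Sf, excess g a = excess g v + ∑ a ∈ Sf.erase v, excess g a :=
      (Finset.add_sum_erase _ _ hvS).symm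
    omega
  obtain ⟨u, huS, hu⟩ := hpos
  obtain ⟨n, hpn⟩ := pathN_of_rtg (Finset.mem_filter.mp huS).2
  obtain ⟨g', hg', hlt⟩ := descent h n g hg v u hv hu hpn
  exact absurd (hgmin g' hg') (by omega)
/-! ### sums over cuts -/

lemma sum_cross (c1 c2 : ℤ) (D : V → V → Prop) (X : Finset V) :
    ∑ v ∈ X, ∑ w ∈ Xᶜ, (c1 * ind (D v w) + c2 * ind (D w v))
      = c1 * arcCount D X Xᶜ + c2 * arcCount D Xᶜ X := by
  have hc : ∑ v ∈ X, ∑ w ∈ Xᶜ, ind (D w v) = arcCount D Xᶜ X := by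
    unfold arcCount; exact Finset.sum_comm
  calc ∑ v ∈ X, ∑ w ∈ Xᶜ, (c1 * ind (D v w) + c2 * ind (D w v))
      = (∑ v ∈ X, ∑ w ∈ Xᶜ, c1 * ind (D v w)) + ∑ v ∈ X, ∑ w ∈ Xᶜ, c2 * ind (D w v) := by
        rw [← Finset.sum_add_distrib]
        exact Finset.sum_congr rfl fun v _ => Finset.sum_add_distrib
    _ = c1 * (∑ v ∈ X, ∑ w ∈ Xᶜ, ind (D v w)) + c2 * ∑ v ∈ X, ∑ w ∈ Xᶜ, ind (D w v) := by
        congr 1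
        · rw [Finset.mul_sum]
          exact Finset.sum_congr rfl fun v _ => (Finset.mul_sum _ _ _).symm
        · rw [Finset.mul_sum]
          exact Finset.sum_congr rfl fun v _ => (Finset.mul_sum _ _ _).symm
    _ = c1 * arcCount D X Xᶜ + c2 * arcCount D Xᶜ X := by rw [hc]; rfl

lemma cross_sum_zero {f : V → V → ℤ} (hs : ∀ v w, f v w = - f w v)
    (hc : ∀ v, ∑ w, f v w = 0) (X : Finset V) :
    ∑ v ∈ X, ∑ w ∈ Xᶜ, f v w = 0 := by
  have h1 : ∑ v ∈ X, ∑ w, f v w = 0 := Finset.sum_eq_zero fun v _ => hc v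
  have h2 : ∀ v ∈ X, ∑ w, f v w = ∑ w ∈ X, f v w + ∑ w ∈ Xᶜ, f v w := fun v _ => by
    rw [Finset.sum_add_sum_compl]
  rw [Finset.sum_congr rfl h2, Finset.sum_add_distrib, sum_sum_skew hs X, zero_add] at h1
  exact h1

/-! ### real arithmetic -/

lemma abs_ge_one {x : ℤ} (h : 1 ≤ |x|) : 1 ≤ x ∨ x ≤ -1 := by
  rcases abs_cases x with ⟨he, _⟩ | ⟨he, _⟩ <;> rw [he] at h <;> omega

lemma real_ineq {k : ℕ} (hk : 3 ≤ k) {a b : ℤ}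
    (h1 : a ≤ ((k : ℤ) - 1) * b) (h2 : b ≤ ((k : ℤ) - 1) * a) :
    |((k : ℝ) / ((k : ℝ) - 2)) * ((a : ℝ) - (b : ℝ))| ≤ (a : ℝ) + (b : ℝ) := by
  have hK : (3 : ℝ) ≤ (k : ℝ) := by exact_mod_cast hk
  have h1' : (a : ℝ) ≤ ((k : ℝ) - 1) * b := by exact_mod_cast h1
  have h2' : (b : ℝ) ≤ ((k : ℝ) - 1) * a := by exact_mod_cast h2
  have hpos : (0 : ℝ) < (k : ℝ) - 2 := by linarith
  have hknn : (0 : ℝ) ≤ (k : ℝ) := by linarith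
  rw [abs_mul, abs_of_nonneg (div_nonneg hknn (le_of_lt hpos)), div_mul_eq_mul_div,
    div_le_iff₀ hpos]
  rcases abs_cases ((a : ℝ) - (b : ℝ)) with ⟨he, _⟩ | ⟨he, _⟩ <;> rw [he] <;> nlinarith

lemma real_ineq' {k : ℕ} (hk : 3 ≤ k) {a b : ℤ} (ha : 0 ≤ a) (hb : 0 ≤ b)
    (h : |((k : ℝ) / ((k : ℝ) - 2)) * ((a : ℝ) - (b : ℝ))| ≤ (a : ℝ) + (b : ℝ)) :
    a ≤ ((k : ℤ) - 1) * b := by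
  have hK : (3 : ℝ) ≤ (k : ℝ) := by exact_mod_cast hk
  have hpos : (0 : ℝ) < (k : ℝ) - 2 := by linarith
  have hknn : (0 : ℝ) ≤ (k : ℝ) := by linarith
  rw [abs_mul, abs_of_nonneg (div_nonneg hknn (le_of_lt hpos)), div_mul_eq_mul_div,
    div_le_iff₀ hpos] at h
  have hd : (a : ℝ) - b ≤ |(a : ℝ) - b| := le_abs_self _
  have key : (a : ℝ) ≤ ((k : ℝ) - 1) * b := by nlinarith
  exact_mod_cast key

lemma flow_tri {M : SimpleGraph V} {k : ℕ} {f : V → V → ℤ} (hf : M.IsNZFlow k f) (v w : V) :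
    ((0 < f v w) ∧ 1 ≤ f v w ∧ f v w ≤ (k : ℤ) - 1) ∨
    ((0 < f w v) ∧ f v w ≤ -1 ∧ -((k : ℤ) - 1) ≤ f v w) ∨
    (¬ (0 < f v w) ∧ ¬ (0 < f w v) ∧ f v w = 0) := by
  obtain ⟨hs, hsup, _, hbd⟩ := hf
  by_cases hadj : M.Adj v w
  · obtain ⟨h1, h2⟩ := hbd v w hadj
    rcases abs_ge_one h1 with hge | hle
    · left
      rcases abs_cases (f v w) with ⟨he, _⟩ | ⟨he, _⟩ <;> rw [he] at h2 <;>
        exact ⟨by omega, hge, by omega⟩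
    · right; left
      have hwv : f w v = - f v w := hs w v
      rcases abs_cases (f v w) with ⟨he, _⟩ | ⟨he, _⟩ <;> rw [he] at h2 <;>
        exact ⟨by omega, hle, by omega⟩
  · have h0 : f v w = 0 := hsup v w hadj
    have h0' : f w v = 0 := hsup w v fun h' => hadj h'.symm
    right; right
    exact ⟨by omega, by omega, h0⟩

end Aux

theorem statement1 (M : SimpleGraph V) [DecidableRel M.Adj] (k : ℕ) (hk : 3 ≤ k) :
    (∃ f, M.IsNZFlow k f) ↔
      ∃ D : V → V → Prop, M.IsOrientation D ∧
        M.IsBalancedValuation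
          (fun v => ((k : ℝ) / ((k : ℝ) - 2)) * (2 * (outDeg D v : ℝ) - (M.degree v : ℝ))) := by
  classical
  constructor
  · rintro ⟨f, hf⟩
    obtain ⟨hs, hsup, hcons, hbd⟩ := hf
    set D : V → V → Prop := fun v w => 0 < f v w with hD
    have hori : M.IsOrientation D := by
      constructor
      · intro v w hd
        by_contra hna
        have hd' : 0 < f v w := hd
        rw [hsup v w hna] at hd'
        exact lt_irrefl 0 hd'
      · intro v w hadj
        have h1 := (hbd v w hadj).1
        have habs := abs_ge_one h1
        have hsk : f w v = - f v w := hs w v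
        show (0 < f v w) ↔ ¬ (0 < f w v)
        rw [hsk]
        omega
    have htri := flow_tri ⟨hs, hsup, hcons, hbd⟩
    have hlow : ∀ v w, 1 * ind (D v w) + (-((k : ℤ) - 1)) * ind (D w v) ≤ f v w := by
      intro v w
      rcases htri v w with ⟨hd, h1, h2⟩ | ⟨hd, h1, h2⟩ | ⟨hd1, hd2, h0⟩
      · rw [ind_true hd, ind_false (ori_not_both hori hd)]; omega
      · rw [ind_true hd, ind_false (ori_not_both hori hd)]; omega
      · rw [ind_false hd1, ind_false hd2]; omega
    have hupp : ∀ v w, f v w ≤ ((k : ℤ) - 1) * ind (D v w) + (-1) * ind (D w v) := by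
      intro v w
      rcases htri v w with ⟨hd, h1, h2⟩ | ⟨hd, h1, h2⟩ | ⟨hd1, hd2, h0⟩
      · rw [ind_true hd, ind_false (ori_not_both hori hd)]; omega
      · rw [ind_true hd, ind_false (ori_not_both hori hd)]; omega
      · rw [ind_false hd1, ind_false hd2]; omega
    refine ⟨D, hori, ?_⟩
    intro X
    have hz := cross_sum_zero hs hcons X
    have hc1 : arcCount D X Xᶜ ≤ ((k : ℤ) - 1) * arcCount D Xᶜ X := by
      have hl : ∑ v ∈ X, ∑ w ∈ Xᶜ, (1 * ind (D v w) + (-((k : ℤ) - 1)) * ind (D w v))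
          ≤ ∑ v ∈ X, ∑ w ∈ Xᶜ, f v w :=
        Finset.sum_le_sum fun v _ => Finset.sum_le_sum fun w _ => hlow v w
      rw [sum_cross, hz] at hl
      linarith
    have hc2 : arcCount D Xᶜ X ≤ ((k : ℤ) - 1) * arcCount D X Xᶜ := by
      have hl : ∑ v ∈ X, ∑ w ∈ Xᶜ, f v w
          ≤ ∑ v ∈ X, ∑ w ∈ Xᶜ, (((k : ℤ) - 1) * ind (D v w) + (-1) * ind (D w v)) :=
        Finset.sum_le_sum fun v _ => Finset.sum_le_sum fun w _ => hupp v w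
      rw [sum_cross, hz] at hl
      linarith
    have hsum_eq : ∑ v ∈ X, ((k : ℝ) / ((k : ℝ) - 2)) * (2 * (outDeg D v : ℝ) - (M.degree v : ℝ))
        = ((k : ℝ) / ((k : ℝ) - 2))
          * (((arcCount D X Xᶜ : ℤ) : ℝ) - ((arcCount D Xᶜ X : ℤ) : ℝ)) := by
      rw [← Finset.mul_sum]
      congr 1
      have hcast : ((∑ v ∈ X, (2 * (outDeg D v : ℤ) - (M.degree v : ℤ)) : ℤ) : ℝ)
          = ∑ v ∈ X, (2 * (outDeg D v : ℝ) - (M.degree v : ℝ)) := by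
        push_cast
        rfl
      rw [← hcast, sum_outdeg hori X]
      push_cast
      ring
    show |∑ v ∈ X, ((k : ℝ) / ((k : ℝ) - 2)) * (2 * (outDeg D v : ℝ) - (M.degree v : ℝ))|
      ≤ (M.cutCard X : ℝ)
    rw [hsum_eq]
    have hccast : (M.cutCard X : ℝ)
        = ((arcCount D X Xᶜ : ℤ) : ℝ) + ((arcCount D Xᶜ X : ℤ) : ℝ) := by
      have := cutCard_eq' hori X
      exact_mod_cast this
    rw [hccast]
    exact real_ineq hk hc1 hc2
  · rintro ⟨D, hori, hbal⟩
    have hcut : ∀ X : Finset V, arcCount D X Xᶜ ≤ ((k : ℤ) - 1) * arcCount D Xᶜ X := by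
      intro X
      have hb := hbal X
      have hsum_eq : ∑ v ∈ X, ((k : ℝ) / ((k : ℝ) - 2)) * (2 * (outDeg D v : ℝ) - (M.degree v : ℝ))
          = ((k : ℝ) / ((k : ℝ) - 2))
            * (((arcCount D X Xᶜ : ℤ) : ℝ) - ((arcCount D Xᶜ X : ℤ) : ℝ)) := by
        rw [← Finset.mul_sum]
        congr 1
        have hcast : ((∑ v ∈ X, (2 * (outDeg D v : ℤ) - (M.degree v : ℤ)) : ℤ) : ℝ)
            = ∑ v ∈ X, (2 * (outDeg D v : ℝ) - (M.degree v : ℝ)) := by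
          push_cast
          rfl
        rw [← hcast, sum_outdeg hori X]
        push_cast
        ring
      have hccast : (M.cutCard X : ℝ)
          = ((arcCount D X Xᶜ : ℤ) : ℝ) + ((arcCount D Xᶜ X : ℤ) : ℝ) := by
        have := cutCard_eq' hori X
        exact_mod_cast this
      rw [SimpleGraph.IsBalancedValuation] at hbal
      have hb' := hbal X
      rw [hsum_eq, hccast] at hb'
      exact real_ineq' hk (arcCount_nonneg D X Xᶜ) (arcCount_nonneg D Xᶜ X) hb'
    obtain ⟨g, hg, hzero⟩ := hoffman hori hk hcut
    refine ⟨g, hg.1, hg.2.1, hzero, ?_⟩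
    intro v w hadj
    have hor : D v w ∨ D w v := by
      have := hori.2 v w hadj
      tauto
    rcases hor with hd | hd
    · have hb := hg.2.2 v w hd
      rw [abs_of_pos (by omega)]
      exact hb
    · have hb := hg.2.2 w v hd
      have hsk : g v w = - g w v := hg.1 v w
      rw [hsk, abs_neg, abs_of_pos (by omega)]
      exact hb
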